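/- For all integers p, t with 1 ≤ p ≤ t, one has Σ_{n=1}^{p} Σ_{m=0}^{t−p} 1/(m+n) = 2(σ_t − σ_{p−1} − σ_{t−p}), where σ_k denotes the k-th Stoll number. -/

import Mathlib

/-- The `p`-th Stoll number `σ_p := (1/2) Σ_{k=1}^{p} Σ_{m=1}^{k} 1/m`. -/
noncomputable def stoll (p : ℕ) : ℝ :=
  (1 / 2) * ∑ k ∈ Finset.Icc 1 p, ∑ m ∈ Finset.Icc 1 k, (1 : ℝ) / (m : ℝ)

/-- The `k`-th harmonic number. -/
noncomputable def Hsum (k : ℕ) : ℝ := ∑ m ∈ Finset.Icc 1 k, (1 : ℝ) / (m : ℝ)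

lemma Hsum_succ (k : ℕ) : Hsum (k + 1) = Hsum k + 1 / ((k : ℝ) + 1) := by
  unfold Hsum
  rw [Finset.sum_Icc_succ_top (by omega : 1 ≤ k + 1)]
  push_cast
  ring

lemma stoll_succ (k : ℕ) : stoll (k + 1) = stoll k + Hsum (k + 1) / 2 := by
  unfold stoll Hsum
  rw [Finset.sum_Icc_succ_top (by omega : 1 ≤ k + 1)]
  ring

lemma shift_sum (a b : ℕ) :
    ∑ n ∈ Finset.Icc 1 a, (1 : ℝ) / ((b : ℝ) + (n : ℝ)) = Hsum (a + b) - Hsum b := by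
  induction a with
  | zero => simp
  | succ a ih =>
      rw [Finset.sum_Icc_succ_top (by omega : 1 ≤ a + 1), ih,
        (by omega : a + 1 + b = (a + b) + 1), Hsum_succ]
      push_cast
      ring

lemma key (a b : ℕ) (ha : 1 ≤ a) :
    ∑ n ∈ Finset.Icc 1 a, ∑ m ∈ Finset.range (b + 1), (1 : ℝ) / ((m : ℝ) + (n : ℝ)) =
      2 * (stoll (a + b) - stoll (a - 1) - stoll b) := by
  induction b with
  | zero =>
      obtain ⟨c, rfl⟩ : ∃ c, a = c + 1 := ⟨a - 1, by omega⟩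
      simp only [Finset.sum_range_one, Nat.cast_zero, zero_add, Nat.add_zero,
        Nat.add_sub_cancel]
      rw [stoll_succ]
      have h0 : stoll 0 = 0 := by simp [stoll]
      rw [h0]
      unfold Hsum
      ring
  | succ b ih =>
      have hrs : ∀ n : ℕ, ∑ m ∈ Finset.range (b + 1 + 1), (1 : ℝ) / ((m : ℝ) + (n : ℝ)) =
          (∑ m ∈ Finset.range (b + 1), (1 : ℝ) / ((m : ℝ) + (n : ℝ)))
            + 1 / (((b : ℝ) + 1) + (n : ℝ)) := by
        intro n
        rw [Finset.sum_range_succ]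
        push_cast
        ring
      simp only [hrs]
      rw [Finset.sum_add_distrib, ih]
      have hsh := shift_sum a (b + 1)
      push_cast at hsh
      rw [hsh, (by omega : a + (b + 1) = (a + b) + 1), stoll_succ (a + b), stoll_succ b]
      ring

/-- Equation (Levproj) of the paper: for `1 ≤ p ≤ t`,
`Σ_{n=1}^{p} Σ_{m=0}^{t−p} 1/(m+n) = 2(σ_t − σ_{p−1} − σ_{t−p})`. -/
theorem levine_harmonic_projection_coeff (p t : ℕ) (hp : 1 ≤ p) (hpt : p ≤ t) :
    ∑ n ∈ Finset.Icc 1 p, ∑ m ∈ Finset.range (t - p + 1), (1 : ℝ) / ((m : ℝ) + (n : ℝ)) =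
      2 * (stoll t - stoll (p - 1) - stoll (t - p)) := by
  have h := key p (t - p) hp
  rwa [(by omega : p + (t - p) = t)] at h
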